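/- Two time-scales dynamic programming with slow-scale independence (finite case): let d range over days 0,...,D and m over minutes 0,...,M. Suppose the slow-scale noise blocks W_{(d,1):(d+1,0)} = (W_{d,1},...,W_{d,M}, W_{d+1,0}) are mutually independent across d (no independence required within a block). Let X_0,...,X_{D+1} be finite state spaces with slow-scale dynamics f_d : X_d × H_{d:d+1} → X_{d+1}, where H_{d:d+1} collects all controls and noises within day d. Define Ṽ_{D+1} = j̃ and Ṽ_d(x) = inf over within-day adapted control processes (U_{d,0},...,U_{d,M}) (σ(U_{d,m}) ⊆ σ(W_{d,1},...,W_{d,m})) of E[ Ṽ_{d+1}( f_d(x, U_{d,0}, W_{d,1}, ..., U_{d,M}, W_{d+1,0}) ) ]. Then Ṽ_d(x_d) equals the infimum over all adapted control processes from day d to day D of E[ j̃(X_{D+1}) ], where X_d = x_d and X_{d'+1} = f_{d'}(X_{d'}, U_{d',0}, W_{d',1}, ..., U_{d',M}, W_{d'+1,0}). -/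

import Mathlib

set_option linter.unusedSectionVars false
set_option maxHeartbeats 1000000


open scoped ENNReal
open Classical

/-- Transport of a state along an equality of day indices. -/
def xcast {X : ℕ → Type} {a b : ℕ} (e : a = b) (x : X a) : X b := e ▸ x

/-- The slow-scale value functions: `Ṽ_{d+n} = K` and `Ṽ_d(x)` is the infimum over
within-day adapted control processes `(U_{d,0},…,U_{d,M})`
(`σ(U_{d,m}) ⊆ σ(W_{d,1},…,W_{d,m})`, so that `U_{d,0}` is deterministic) of
`E[ Ṽ_{d+1}( f_d(x, U_{d,0}, W_{d,1}, …, U_{d,M}, W_{d+1,0}) ) ]`. -/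
noncomputable def Vday {X : ℕ → Type} {Uc Wn : ℕ → ℕ → Type} {Ω : Type} (M : ℕ)
    (P : Ω → ℝ≥0∞) (Wp : ∀ d m, Ω → Wn d m)
    (f : ∀ d, X d → (∀ m : Fin (M + 1), Uc d m) →
      (∀ m : Fin M, Wn d ((m : ℕ) + 1)) → Wn (d + 1) 0 → X (d + 1)) :
    ∀ (n d : ℕ), (X (d + n) → ℝ≥0∞) → X d → ℝ≥0∞
  | 0, _, K, x => K x
  | n + 1, d, K, x =>
      ⨅ Ud : {Ud : ∀ m : Fin (M + 1), Ω → Uc d m //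
          ∀ (m : Fin (M + 1)) (ω ω' : Ω),
            (∀ m', 1 ≤ m' → m' ≤ (m : ℕ) → Wp d m' ω = Wp d m' ω') → Ud m ω = Ud m ω'},
        ∑' ω : Ω,
          Vday M P Wp f n (d + 1) (fun x' => K (xcast (by omega) x'))
            (f d x (fun m => Ud.1 m ω) (fun m => Wp d ((m : ℕ) + 1) ω)
              (Wp (d + 1) 0 ω)) * P ω

/-- The random slow-scale state trajectory `X_d = x`,
`X_{d'+1} = f_{d'}(X_{d'}, U_{d',0}, W_{d',1}, …, U_{d',M}, W_{d'+1,0})` driven by a control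
process `Up` and the noises. -/
def trajDay {X : ℕ → Type} {Uc Wn : ℕ → ℕ → Type} {Ω : Type} (M : ℕ)
    (Wp : ∀ d m, Ω → Wn d m)
    (f : ∀ d, X d → (∀ m : Fin (M + 1), Uc d m) →
      (∀ m : Fin M, Wn d ((m : ℕ) + 1)) → Wn (d + 1) 0 → X (d + 1))
    (Up : ∀ d m, Ω → Uc d m) :
    ∀ (n d : ℕ), X d → Ω → X (d + n)
  | 0, _, x, _ => x
  | n + 1, d, x, ω =>
      f (d + n) (trajDay M Wp f Up n d x ω) (fun m => Up (d + n) m ω)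
        (fun m => Wp (d + n) ((m : ℕ) + 1) ω) (Wp (d + n + 1) 0 ω)

@[simp] lemma xcast_rfl {X : ℕ → Type} {a : ℕ} (x : X a) : xcast rfl x = x := rfl

lemma xcast_xcast {X : ℕ → Type} {a b c : ℕ} (e1 : a = b) (e2 : b = c) (x : X a) :
    xcast e2 (xcast e1 x) = xcast (e1.trans e2) x := by subst e1; subst e2; rfl

lemma xcast_irrel {X : ℕ → Type} {a b : ℕ} (e e' : a = b) (x : X a) :
    xcast e x = xcast e' x := by congr

lemma xcast_self {X : ℕ → Type} {a : ℕ} (e : a = a) (x : X a) : xcast e x = x := by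
  rw [xcast_irrel e rfl]; rfl

section helpers

variable {X : ℕ → Type} {Uc Wn : ℕ → ℕ → Type} {Ω : Type} (M : ℕ)
    (Wp : ∀ d m, Ω → Wn d m)
    (f : ∀ d, X d → (∀ m : Fin (M + 1), Uc d m) →
      (∀ m : Fin M, Wn d ((m : ℕ) + 1)) → Wn (d + 1) 0 → X (d + 1))

/-- the day-`d` noise block -/
def bl (d : ℕ) (ω : Ω) : (∀ m : Fin M, Wn d ((m : ℕ) + 1)) × Wn (d + 1) 0 :=
  (fun m => Wp d ((m : ℕ) + 1) ω, Wp (d + 1) 0 ω)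

lemma bl_iff (d : ℕ) (ω ω' : Ω) :
    bl M Wp d ω = bl M Wp d ω' ↔
      ((∀ m', 1 ≤ m' → m' ≤ M → Wp d m' ω = Wp d m' ω') ∧
        Wp (d + 1) 0 ω = Wp (d + 1) 0 ω') := by
  constructor
  · intro h
    have h1 := congrArg Prod.fst h
    have h2 := congrArg Prod.snd h
    refine ⟨fun m' h1m hm' => ?_, h2⟩
    obtain ⟨m, rfl⟩ : ∃ m, m' = m + 1 := ⟨m' - 1, by omega⟩
    exact congrFun h1 ⟨m, by omega⟩
  · intro ⟨h1, h2⟩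
    unfold bl
    exact Prod.ext (funext fun m => h1 _ (by omega) (by omega)) h2

/-- peeling the first day off the trajectory -/
lemma traj_peel (Up : ∀ d m, Ω → Uc d m) :
    ∀ (n d : ℕ) (x : X d) (ω : Ω) (h : (d + 1) + n = d + (n + 1)),
      trajDay M Wp f Up (n + 1) d x ω =
        xcast h (trajDay M Wp f Up n (d + 1)
          (f d x (fun m => Up d m ω) (fun m => Wp d ((m : ℕ) + 1) ω) (Wp (d + 1) 0 ω)) ω) := by
  intro n
  induction n with
  | zero =>
    intro d x ω h
    rw [xcast_self]
    rfl
  | succ n ih =>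
    intro d x ω h
    have h2 : d + 1 + n = d + (n + 1) := by omega
    have h' : (d + 1 + n) + 1 = d + (n + 1 + 1) := h
    show f (d + (n+1)) (trajDay M Wp f Up (n+1) d x ω) (fun m => Up (d+(n+1)) (m:ℕ) ω)
        (fun m => Wp (d+(n+1)) ((m:ℕ)+1) ω) (Wp (d+(n+1)+1) 0 ω)
      = xcast h' (f (d+1+n)
          (trajDay M Wp f Up n (d+1)
            (f d x (fun m => Up d (m:ℕ) ω) (fun m => Wp d ((m:ℕ)+1) ω) (Wp (d+1) 0 ω)) ω)
          (fun m => Up (d+1+n) (m:ℕ) ω) (fun m => Wp (d+1+n) ((m:ℕ)+1) ω) (Wp (d+1+n+1) 0 ω))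
    rw [ih d x ω h2]
    generalize trajDay M Wp f Up n (d+1)
      (f d x (fun m => Up d (m:ℕ) ω) (fun m => Wp d ((m:ℕ)+1) ω) (Wp (d+1) 0 ω)) ω = t
    clear h
    revert h2 h' t
    generalize d + 1 + n = k
    intro e1 e2 t
    subst e1
    rw [xcast_self, xcast_self]


/-- congruence for trajectories: if the controls used agree and the noise blocks agree,
the trajectories agree. -/
lemma traj_congr (Up1 Up2 : ∀ d m, Ω → Uc d m) :
    ∀ (n d₀ : ℕ) (y : X d₀) (ω ω' : Ω),
      (∀ d' m', d₀ ≤ d' → d' < d₀ + n → m' ≤ M → Up1 d' m' ω = Up2 d' m' ω') →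
      (∀ d', d₀ ≤ d' → d' < d₀ + n → bl M Wp d' ω = bl M Wp d' ω') →
      trajDay M Wp f Up1 n d₀ y ω = trajDay M Wp f Up2 n d₀ y ω' := by
  intro n
  induction n with
  | zero => intro d₀ y ω ω' _ _; rfl
  | succ n ih =>
    intro d₀ y ω ω' hU hW
    show f (d₀ + n) (trajDay M Wp f Up1 n d₀ y ω) _ _ _ = f (d₀ + n) (trajDay M Wp f Up2 n d₀ y ω') _ _ _
    have hbl := hW (d₀ + n) (by omega) (by omega)
    have h1 : (fun m : Fin M => Wp (d₀ + n) ((m : ℕ) + 1) ω) = (fun m : Fin M => Wp (d₀ + n) ((m : ℕ) + 1) ω') :=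
      congrArg Prod.fst hbl
    have h2 : Wp (d₀ + n + 1) 0 ω = Wp (d₀ + n + 1) 0 ω' := congrArg Prod.snd hbl
    rw [ih d₀ y ω ω' (fun d' m' h1 h2 h3 => hU d' m' h1 (by omega) h3)
        (fun d' ha hb => hW d' ha (by omega)), h1, h2]
    congr 1
    funext m
    exact hU (d₀ + n) (m : ℕ) (by omega) (by omega) (by omega)

end helpers

lemma choose_eq {α : Sort*} {p q : α → Prop} (h : p = q) (hp : ∃ a, p a) (hq : ∃ a, q a) :
    hp.choose = hq.choose := by subst h; rfl

/-- classical indicator -/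
noncomputable def ind (p : Prop) : ℝ≥0∞ := if p then 1 else 0

lemma ind_ite (p : Prop) [Decidable p] (x : ℝ≥0∞) : (if p then x else 0) = ind p * x := by
  by_cases h : p <;> simp [ind, h]

lemma ind_pos {p : Prop} (h : p) : ind p = 1 := by simp [ind, h]

lemma ind_neg {p : Prop} (h : ¬ p) : ind p = 0 := by simp [ind, h]

lemma ind_congr {p q : Prop} (h : p ↔ q) : ind p = ind q := by
  by_cases hp : p
  · rw [ind_pos hp, ind_pos (h.1 hp)]
  · rw [ind_neg hp, ind_neg (fun hq => hp (h.2 hq))]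

lemma ind_and (p q : Prop) : ind (p ∧ q) = ind p * ind q := by
  by_cases hp : p <;> by_cases hq : q <;> simp [ind, hp, hq]

lemma sum_ind_eq {α : Type*} [Fintype α] (a : α) (x : α → ℝ≥0∞) :
    ∑ c : α, ind (a = c) * x c = x a := by
  have : ∀ c : α, ind (a = c) * x c = if a = c then x c else 0 := fun c => by
    by_cases h : a = c <;> simp [ind, h]
  simp only [this]
  rw [Finset.sum_ite_eq Finset.univ a x]
  simp

/-- choose a value from a witness of a predicate -/
noncomputable def pick {Ω : Type} {β : Sort*} (p : Ω → Prop) (dflt : β) (val : Ω → β) : β :=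
  if h : ∃ ω, p ω then val h.choose else dflt

lemma pick_congr {Ω : Type} {β : Sort*} {p q : Ω → Prop} (h : p = q) (dflt : β) (val : Ω → β) :
    pick p dflt val = pick q dflt val := by rw [h]

lemma pick_spec {Ω : Type} {β : Sort*} (p : Ω → Prop) (dflt : β) (val : Ω → β)
    (h : ∃ ω, p ω) : p (h.choose) ∧ pick p dflt val = val h.choose := by
  refine ⟨h.choose_spec, ?_⟩
  unfold pick
  rw [dif_pos h]

lemma fiber_sum {Ω α : Type} [Fintype Ω] [Fintype α] (g : Ω → α) (F : Ω → ℝ≥0∞) :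
    ∑ a : α, ∑ ω : Ω, ind (g ω = a) * F ω = ∑ ω : Ω, F ω := by
  rw [Finset.sum_comm]
  exact Finset.sum_congr rfl fun ω _ => sum_ind_eq (g ω) (fun _ => F ω)

lemma part_sum {Ω : Type} [Fintype Ω] (r : Ω → Ω) (F : Ω → ℝ≥0∞) :
    ∑ ω₀ : Ω, ∑ ω : Ω, ind (r ω = ω₀) * F ω = ∑ ω : Ω, F ω := by
  rw [Finset.sum_comm]
  exact Finset.sum_congr rfl fun ω _ => sum_ind_eq (r ω) (fun _ => F ω)

section indep

variable {Wn : ℕ → ℕ → Type} [∀ d m, Fintype (Wn d m)] [∀ d m, Nonempty (Wn d m)]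
    {Ω : Type} [Fintype Ω] (M : ℕ) (Wp : ∀ d m, Ω → Wn d m) (P : Ω → ℝ≥0∞) (D : ℕ)

/-- marginal pmf of the day-`d` block -/
noncomputable def qm (d : ℕ) (c : (∀ m : Fin M, Wn d ((m : ℕ) + 1)) × Wn (d + 1) 0) : ℝ≥0∞ :=
  ∑ ω : Ω, ind (bl M Wp d ω = c) * P ω

lemma sum_qm (hP : ∑ ω : Ω, P ω = 1) (d : ℕ) : ∑ c, qm M Wp P d c = 1 := by
  unfold qm
  rw [Finset.sum_comm, ← hP]
  exact Finset.sum_congr rfl fun ω _ => sum_ind_eq (bl M Wp d ω) (fun _ => P ω)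

/-- a full noise profile realizing the block profile `γ` -/
noncomputable def wof (γ : ∀ d', (∀ m : Fin M, Wn d' ((m : ℕ) + 1)) × Wn (d' + 1) 0) :
    ∀ d m, Wn d m
  | d, m + 1 => if h : m < M ∧ d ≤ D then (γ d).1 ⟨m, h.1⟩ else Classical.arbitrary _
  | 0, 0 => Classical.arbitrary _
  | d + 1, 0 => if _ : d ≤ D then (γ d).2 else Classical.arbitrary _

lemma wof_eq1 (γ : ∀ d', (∀ m : Fin M, Wn d' ((m : ℕ) + 1)) × Wn (d' + 1) 0)
    (d m : ℕ) (hm : m < M) (hd : d ≤ D) : wof M D γ d (m + 1) = (γ d).1 ⟨m, hm⟩ := by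
  simp [wof, hm, hd]

lemma wof_eq0 (γ : ∀ d', (∀ m : Fin M, Wn d' ((m : ℕ) + 1)) × Wn (d' + 1) 0)
    (d : ℕ) (hd : d ≤ D) : wof M D γ (d + 1) 0 = (γ d).2 := by
  simp [wof, hd]

lemma wof_match (γ : ∀ d', (∀ m : Fin M, Wn d' ((m : ℕ) + 1)) × Wn (d' + 1) 0)
    (d : ℕ) (hd : d ≤ D) (ω : Ω) :
    ((∀ m, 1 ≤ m → m ≤ M → Wp d m ω = wof M D γ d m) ∧
        Wp (d + 1) 0 ω = wof M D γ (d + 1) 0) ↔ bl M Wp d ω = γ d := by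
  rw [wof_eq0 M D γ d hd]
  constructor
  · rintro ⟨h1, h2⟩
    refine Prod.ext (funext fun m => ?_) h2
    show Wp d ((m : ℕ) + 1) ω = (γ d).1 m
    rw [h1 ((m : ℕ) + 1) (by omega) (by omega), wof_eq1 M D γ d (m : ℕ) m.isLt hd]
  · intro h
    have h1 : (fun m : Fin M => Wp d ((m : ℕ) + 1) ω) = (γ d).1 := congrArg Prod.fst h
    have h2 : Wp (d + 1) 0 ω = (γ d).2 := congrArg Prod.snd h
    refine ⟨fun m hm1 hm2 => ?_, h2⟩
    obtain ⟨m', rfl⟩ : ∃ m', m = m' + 1 := ⟨m - 1, by omega⟩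
    rw [wof_eq1 M D γ d m' (by omega) hd]
    exact congrFun h1 ⟨m', by omega⟩

lemma hindBlock
    (hind : ∀ w : ∀ d m, Wn d m,
      (∑' ω : Ω, if (∀ d, d ≤ D →
            ((∀ m, 1 ≤ m → m ≤ M → Wp d m ω = w d m) ∧ Wp (d + 1) 0 ω = w (d + 1) 0))
          then P ω else 0)
        = ∏ d ∈ Finset.range (D + 1),
            ∑' ω : Ω, if ((∀ m, 1 ≤ m → m ≤ M → Wp d m ω = w d m) ∧
                Wp (d + 1) 0 ω = w (d + 1) 0) then P ω else 0)
    (γ : ∀ d', (∀ m : Fin M, Wn d' ((m : ℕ) + 1)) × Wn (d' + 1) 0) :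
    (∑ ω : Ω, ind (∀ d' ∈ Finset.range (D + 1), bl M Wp d' ω = γ d') * P ω)
      = ∏ d' ∈ Finset.range (D + 1), qm M Wp P d' (γ d') := by
  have h := hind (wof M D γ)
  simp only [tsum_fintype, ind_ite] at h
  refine Eq.trans ?_ (Eq.trans h ?_)
  · refine Finset.sum_congr rfl fun ω _ => ?_
    refine congrArg (· * P ω) (ind_congr ⟨fun hh dd hdd => ?_, fun hh dd hdd => ?_⟩)
    · exact (wof_match M Wp D γ dd hdd ω).2 (hh dd (Finset.mem_range.2 (by omega)))
    · exact (wof_match M Wp D γ dd (by have := Finset.mem_range.1 hdd; omega) ω).1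
        (hh dd (by have := Finset.mem_range.1 hdd; omega))
  · refine Finset.prod_congr rfl fun dd hdd => ?_
    refine Finset.sum_congr rfl fun ω _ => ?_
    exact congrArg (· * P ω)
      (ind_congr (wof_match M Wp D γ dd (by have := Finset.mem_range.1 hdd; omega) ω))

lemma sum_ind_and {α : Type*} [Fintype α] (a : α) (Q : Prop) (p : ℝ≥0∞) :
    ∑ c : α, ind (a = c ∧ Q) * p = ind Q * p := by
  simp only [ind_and, mul_assoc]
  exact sum_ind_eq a (fun _ => ind Q * p)

lemma joint' (hP : ∑ ω : Ω, P ω = 1)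
    (hB : ∀ γ : ∀ d', (∀ m : Fin M, Wn d' ((m : ℕ) + 1)) × Wn (d' + 1) 0,
      (∑ ω : Ω, ind (∀ d' ∈ Finset.range (D + 1), bl M Wp d' ω = γ d') * P ω)
        = ∏ d' ∈ Finset.range (D + 1), qm M Wp P d' (γ d')) :
    ∀ (J : Finset ℕ) (γ : ∀ d', (∀ m : Fin M, Wn d' ((m : ℕ) + 1)) × Wn (d' + 1) 0),
      (∑ ω : Ω, ind (∀ d' ∈ Finset.range (D + 1) \ J, bl M Wp d' ω = γ d') * P ω)
        = ∏ d' ∈ Finset.range (D + 1) \ J, qm M Wp P d' (γ d') := by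
  intro J
  induction J using Finset.induction with
  | empty => simpa using hB
  | @insert j J hj ih =>
    intro γ
    by_cases hjm : j ∈ Finset.range (D + 1) \ J
    · have hAA : Finset.range (D + 1) \ J
          = insert j (Finset.range (D + 1) \ insert j J) := by
        ext k
        simp only [Finset.mem_sdiff, Finset.mem_insert]
        rw [Finset.mem_sdiff] at hjm
        constructor
        · rintro ⟨h1, h2⟩
          by_cases hk : k = j
          · exact Or.inl hk
          · exact Or.inr ⟨h1, fun hor => hor.elim (fun h => hk h) h2⟩
        · rintro (rfl | ⟨h1, h2⟩)
          · exact hjm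
          · exact ⟨h1, fun hh => h2 (Or.inr hh)⟩
      have hjA' : j ∉ Finset.range (D + 1) \ insert j J := by simp
      calc (∑ ω : Ω, ind (∀ d' ∈ Finset.range (D + 1) \ insert j J,
              bl M Wp d' ω = γ d') * P ω)
          = ∑ ω : Ω, ∑ c, ind (bl M Wp j ω = c ∧ ∀ d' ∈ Finset.range (D + 1) \ insert j J,
              bl M Wp d' ω = γ d') * P ω := by
            exact Finset.sum_congr rfl fun ω _ => (sum_ind_and (bl M Wp j ω) _ (P ω)).symm
        _ = ∑ c, ∑ ω : Ω, ind (bl M Wp j ω = c ∧ ∀ d' ∈ Finset.range (D + 1) \ insert j J,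
              bl M Wp d' ω = γ d') * P ω := Finset.sum_comm
        _ = ∑ c, ∑ ω : Ω, ind (∀ d' ∈ Finset.range (D + 1) \ J,
              bl M Wp d' ω = Function.update γ j c d') * P ω := by
            refine Finset.sum_congr rfl fun c _ => Finset.sum_congr rfl fun ω _ => ?_
            refine congrArg (· * P ω) (ind_congr ?_)
            rw [hAA, Finset.forall_mem_insert, Function.update_self]
            constructor
            · rintro ⟨h1, h2⟩
              refine ⟨h1, fun d' hd' => ?_⟩
              rw [Function.update_of_ne (by rintro rfl; exact hjA' hd')]
              exact h2 d' hd'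
            · rintro ⟨h1, h2⟩
              refine ⟨h1, fun d' hd' => ?_⟩
              have := h2 d' hd'
              rwa [Function.update_of_ne (by rintro rfl; exact hjA' hd')] at this
        _ = ∑ c, ∏ d' ∈ Finset.range (D + 1) \ J, qm M Wp P d' (Function.update γ j c d') :=
            Finset.sum_congr rfl fun c _ => ih (Function.update γ j c)
        _ = ∑ c, qm M Wp P j c
              * ∏ d' ∈ Finset.range (D + 1) \ insert j J, qm M Wp P d' (γ d') := by
            refine Finset.sum_congr rfl fun c _ => ?_
            rw [hAA, Finset.prod_insert hjA', Function.update_self]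
            congr 1
            refine Finset.prod_congr rfl fun d' hd' => ?_
            rw [Function.update_of_ne (by rintro rfl; exact hjA' hd')]
        _ = ∏ d' ∈ Finset.range (D + 1) \ insert j J, qm M Wp P d' (γ d') := by
            rw [← Finset.sum_mul, sum_qm M Wp P hP, one_mul]
    · have heq : Finset.range (D + 1) \ insert j J = Finset.range (D + 1) \ J := by
        ext k
        simp only [Finset.mem_sdiff, Finset.mem_insert]
        rw [Finset.mem_sdiff] at hjm
        constructor
        · rintro ⟨h1, h2⟩; exact ⟨h1, fun hh => h2 (Or.inr hh)⟩
        · rintro ⟨h1, h2⟩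
          refine ⟨h1, fun hor => ?_⟩
          rcases hor with rfl | hh
          · exact hjm ⟨h1, h2⟩
          · exact h2 hh
      rw [heq]; exact ih γ

lemma joint (hP : ∑ ω : Ω, P ω = 1)
    (hB : ∀ γ : ∀ d', (∀ m : Fin M, Wn d' ((m : ℕ) + 1)) × Wn (d' + 1) 0,
      (∑ ω : Ω, ind (∀ d' ∈ Finset.range (D + 1), bl M Wp d' ω = γ d') * P ω)
        = ∏ d' ∈ Finset.range (D + 1), qm M Wp P d' (γ d'))
    (I : Finset ℕ) (hI : I ⊆ Finset.range (D + 1))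
    (γ : ∀ d', (∀ m : Fin M, Wn d' ((m : ℕ) + 1)) × Wn (d' + 1) 0) :
    (∑ ω : Ω, ind (∀ d' ∈ I, bl M Wp d' ω = γ d') * P ω)
      = ∏ d' ∈ I, qm M Wp P d' (γ d') := by
  have h := joint' M Wp P D hP hB (Finset.range (D + 1) \ I) γ
  rwa [sdiff_sdiff_eq_self hI] at h


lemma indep (hP : ∑ ω : Ω, P ω = 1)
    (hB : ∀ γ : ∀ d', (∀ m : Fin M, Wn d' ((m : ℕ) + 1)) × Wn (d' + 1) 0,
      (∑ ω : Ω, ind (∀ d' ∈ Finset.range (D + 1), bl M Wp d' ω = γ d') * P ω)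
        = ∏ d' ∈ Finset.range (D + 1), qm M Wp P d' (γ d'))
    (d : ℕ) (hd : d ≤ D) (b : (∀ m : Fin M, Wn d ((m : ℕ) + 1)) × Wn (d + 1) 0)
    (h : Ω → ℝ≥0∞)
    (hdep : ∀ ω ω', (∀ d', d + 1 ≤ d' → d' ≤ D → bl M Wp d' ω = bl M Wp d' ω') →
      h ω = h ω') :
    ∑ ω : Ω, ind (bl M Wp d ω = b) * (h ω * P ω)
      = qm M Wp P d b * ∑ ω : Ω, h ω * P ω := by
  set S : Ω → Ω → Prop :=
    fun ω ω' => ∀ d', d + 1 ≤ d' → d' ≤ D → bl M Wp d' ω = bl M Wp d' ω' with hS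
  have Srefl : ∀ ω, S ω ω := fun ω d' _ _ => rfl
  have Strans : ∀ ω₁ ω₂ ω₃, S ω₁ ω₂ → S ω₂ ω₃ → S ω₁ ω₃ :=
    fun ω₁ ω₂ ω₃ h1 h2 d' ha hb => (h1 d' ha hb).trans (h2 d' ha hb)
  have Ssymm : ∀ ω₁ ω₂, S ω₁ ω₂ → S ω₂ ω₁ := fun ω₁ ω₂ h1 d' ha hb => (h1 d' ha hb).symm
  have Scong : ∀ ω₁ ω₂, S ω₁ ω₂ → (fun ω' => S ω₁ ω') = (fun ω' => S ω₂ ω') := by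
    intro ω₁ ω₂ h12
    funext ω'
    exact propext ⟨fun hh => Strans _ _ _ (Ssymm _ _ h12) hh, fun hh => Strans _ _ _ h12 hh⟩
  have hex : ∀ ω : Ω, ∃ ω', S ω ω' := fun ω => ⟨ω, Srefl ω⟩
  set r : Ω → Ω := fun ω => (hex ω).choose with hr
  have hrS : ∀ ω, S ω (r ω) := fun ω => (hex ω).choose_spec
  have hr_eq : ∀ ω ω', S ω ω' → r ω = r ω' :=
    fun ω ω' hSS => choose_eq (Scong ω ω' hSS) (hex ω) (hex ω')
  have hiff : ∀ ω ω₀, r ω = ω₀ ↔ (S ω ω₀ ∧ r ω₀ = ω₀) := by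
    intro ω ω₀
    constructor
    · intro hh
      have h1 : S ω ω₀ := hh ▸ hrS ω
      exact ⟨h1, (hr_eq ω ω₀ h1).symm.trans hh⟩
    · rintro ⟨h1, h2⟩
      exact (hr_eq ω ω₀ h1).trans h2
  -- cylinder identity
  have CYL : ∀ ω₀ : Ω,
      ∑ ω : Ω, ind (bl M Wp d ω = b ∧ S ω ω₀) * P ω
        = qm M Wp P d b * ∑ ω : Ω, ind (S ω ω₀) * P ω := by
    intro ω₀
    set γ : ∀ d', (∀ m : Fin M, Wn d' ((m : ℕ) + 1)) × Wn (d' + 1) 0 :=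
      Function.update (fun d' => bl M Wp d' ω₀) d b with hγ
    have hI2 : Finset.Icc (d + 1) D ⊆ Finset.range (D + 1) := by
      intro k hk
      rw [Finset.mem_Icc] at hk
      exact Finset.mem_range.2 (by omega)
    have hdI2 : d ∉ Finset.Icc (d + 1) D := by
      rw [Finset.mem_Icc]; omega
    have hγd : γ d = b := by rw [hγ]; exact Function.update_self _ _ _
    have hγd' : ∀ d' ∈ Finset.Icc (d + 1) D, γ d' = bl M Wp d' ω₀ := by
      intro d' hd'
      rw [Finset.mem_Icc] at hd'
      rw [hγ]
      exact Function.update_of_ne (show d' ≠ d by omega) _ _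
    have j1 := joint M Wp P D hP hB (insert d (Finset.Icc (d + 1) D))
      (by intro k hk
          rcases Finset.mem_insert.1 hk with rfl | hk
          · exact Finset.mem_range.2 (by omega)
          · exact hI2 hk) γ
    have j2 := joint M Wp P D hP hB (Finset.Icc (d + 1) D) hI2 γ
    rw [Finset.prod_insert hdI2] at j1
    have e1 : (∑ ω : Ω, ind (∀ d' ∈ insert d (Finset.Icc (d + 1) D),
        bl M Wp d' ω = γ d') * P ω) = ∑ ω : Ω, ind (bl M Wp d ω = b ∧ S ω ω₀) * P ω := by
      refine Finset.sum_congr rfl fun ω _ => congrArg (· * P ω) (ind_congr ?_)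
      rw [Finset.forall_mem_insert, hγd]
      constructor
      · rintro ⟨h1, h2⟩
        refine ⟨h1, fun d' ha hb' => ?_⟩
        rw [h2 d' (Finset.mem_Icc.2 ⟨ha, hb'⟩), hγd' d' (Finset.mem_Icc.2 ⟨ha, hb'⟩)]
      · rintro ⟨h1, h2⟩
        refine ⟨h1, fun d' hd' => ?_⟩
        rw [hγd' d' hd']
        have := Finset.mem_Icc.1 hd'
        exact h2 d' this.1 this.2
    have e2 : (∑ ω : Ω, ind (∀ d' ∈ Finset.Icc (d + 1) D,
        bl M Wp d' ω = γ d') * P ω) = ∑ ω : Ω, ind (S ω ω₀) * P ω := by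
      refine Finset.sum_congr rfl fun ω _ => congrArg (· * P ω) (ind_congr ?_)
      constructor
      · intro h1 d' ha hb'
        rw [h1 d' (Finset.mem_Icc.2 ⟨ha, hb'⟩), hγd' d' (Finset.mem_Icc.2 ⟨ha, hb'⟩)]
      · intro h1 d' hd'
        rw [hγd' d' hd']
        have := Finset.mem_Icc.1 hd'
        exact h1 d' this.1 this.2
    rw [e1] at j1
    rw [e2] at j2
    rw [j1, j2, hγd]
  -- main computation
  rw [← part_sum r (fun ω => ind (bl M Wp d ω = b) * (h ω * P ω)),
    ← part_sum r (fun ω => h ω * P ω), Finset.mul_sum]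
  refine Finset.sum_congr rfl fun ω₀ _ => ?_
  by_cases hfix : r ω₀ = ω₀
  · have eL : ∀ ω : Ω, ind (r ω = ω₀) * (ind (bl M Wp d ω = b) * (h ω * P ω))
        = h ω₀ * (ind (bl M Wp d ω = b ∧ S ω ω₀) * P ω) := by
      intro ω
      by_cases hSω : S ω ω₀
      · by_cases hb : bl M Wp d ω = b
        · rw [ind_pos ((hiff ω ω₀).2 ⟨hSω, hfix⟩), ind_pos hb, ind_pos ⟨hb, hSω⟩,
            hdep ω ω₀ hSω]
          ring
        · have z1 : ind (bl M Wp d ω = b) = 0 := ind_neg hb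
          have z2 : ind (bl M Wp d ω = b ∧ S ω ω₀) = 0 := ind_neg (fun hh => hb hh.1)
          rw [z1, z2]
          ring
      · have z1 : ind (r ω = ω₀) = 0 := ind_neg (fun hh => hSω ((hiff ω ω₀).1 hh).1)
        have z2 : ind (bl M Wp d ω = b ∧ S ω ω₀) = 0 := ind_neg (fun hh => hSω hh.2)
        rw [z1, z2]
        ring
    have eR : ∀ ω : Ω, ind (r ω = ω₀) * (h ω * P ω) = h ω₀ * (ind (S ω ω₀) * P ω) := by
      intro ω
      by_cases hSω : S ω ω₀
      · rw [ind_pos ((hiff ω ω₀).2 ⟨hSω, hfix⟩), ind_pos hSω, hdep ω ω₀ hSω]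
        ring
      · have z1 : ind (r ω = ω₀) = 0 := ind_neg (fun hh => hSω ((hiff ω ω₀).1 hh).1)
        have z2 : ind (S ω ω₀) = 0 := ind_neg hSω
        rw [z1, z2]
        ring
    simp only [eL, eR]
    rw [← Finset.mul_sum, ← Finset.mul_sum, CYL ω₀]
    ring
  · have hz : ∀ ω : Ω, ind (r ω = ω₀) = 0 :=
      fun ω => ind_neg (fun hh => hfix ((hiff ω ω₀).1 hh).2)
    simp [hz]

end indep



/-- two time-scales dynamic programming with slow-scale independence (finite
case). If the slow-scale noise blocks `(W_{d,1},…,W_{d,M},W_{d+1,0})` are mutually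
independent across days `d = 0,…,D` (their joint pmf factorizes across days), then the slow
scale Bellman recursion `Ṽ_{D+1} = j̃`,
`Ṽ_d(x) = inf over within-day adapted controls of E[Ṽ_{d+1}(f_d(x, U_{d,0}, W_{d,1}, …,
U_{d,M}, W_{d+1,0}))]` computes the overall optimal value: `Ṽ_d(x_d)` equals the infimum
over all adapted control processes from day `d` on (the control at minute `m'` of day `d'`
may depend on all noises of the horizon from just after `(d,0)` up to `(d',m')` in the
lexicographic order) of `E[ j̃(X_{D+1}) ]`. -/
theorem two_time_scale_dp {X : ℕ → Type} {Uc Wn : ℕ → ℕ → Type}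
    [∀ d m, Fintype (Wn d m)] [∀ d m, Nonempty (Wn d m)]
    [∀ d m, Fintype (Uc d m)] [∀ d m, Nonempty (Uc d m)] [∀ d, Fintype (X d)]
    {Ω : Type} [Fintype Ω] [Nonempty Ω]
    (P : Ω → ℝ≥0∞) (hP : ∑' ω : Ω, P ω = 1)
    (Wp : ∀ d m, Ω → Wn d m) (D M : ℕ)
    (hind : ∀ w : ∀ d m, Wn d m,
      (∑' ω : Ω, if (∀ d, d ≤ D →
            ((∀ m, 1 ≤ m → m ≤ M → Wp d m ω = w d m) ∧ Wp (d + 1) 0 ω = w (d + 1) 0))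
          then P ω else 0)
        = ∏ d ∈ Finset.range (D + 1),
            ∑' ω : Ω, if ((∀ m, 1 ≤ m → m ≤ M → Wp d m ω = w d m) ∧
                Wp (d + 1) 0 ω = w (d + 1) 0) then P ω else 0)
    (f : ∀ d, X d → (∀ m : Fin (M + 1), Uc d m) →
      (∀ m : Fin M, Wn d ((m : ℕ) + 1)) → Wn (d + 1) 0 → X (d + 1))
    (jt : X (D + 1) → ℝ≥0∞)
    (n d : ℕ) (e : d + n = D + 1) (x : X d) :
    Vday M P Wp f n d (fun x' => jt (xcast e x')) x
      = ⨅ Up : {Up : ∀ d' m', Ω → Uc d' m' //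
            ∀ (d' m' : ℕ) (ω ω' : Ω),
              (∀ d'' m'',
                  ((d < d'' ∧ m'' = 0) ∨ (d ≤ d'' ∧ 1 ≤ m'' ∧ m'' ≤ M)) →
                  (d'' < d' ∨ (d'' = d' ∧ m'' ≤ m')) →
                  Wp d'' m'' ω = Wp d'' m'' ω') →
              Up d' m' ω = Up d' m' ω'},
          ∑' ω : Ω, jt (xcast e (trajDay M Wp f Up.1 n d x ω)) * P ω := by
  induction n generalizing d x with
  | zero =>
    haveI : Nonempty {Up : ∀ d' m', Ω → Uc d' m' //
        ∀ (d' m' : ℕ) (ω ω' : Ω),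
          (∀ d'' m'',
              ((d < d'' ∧ m'' = 0) ∨ (d ≤ d'' ∧ 1 ≤ m'' ∧ m'' ≤ M)) →
              (d'' < d' ∨ (d'' = d' ∧ m'' ≤ m')) →
              Wp d'' m'' ω = Wp d'' m'' ω') →
          Up d' m' ω = Up d' m' ω'} :=
      ⟨⟨fun _ _ _ => Classical.arbitrary _, fun _ _ _ _ _ => rfl⟩⟩
    have hconst : ∀ Up : {Up : ∀ d' m', Ω → Uc d' m' //
        ∀ (d' m' : ℕ) (ω ω' : Ω),
          (∀ d'' m'',
              ((d < d'' ∧ m'' = 0) ∨ (d ≤ d'' ∧ 1 ≤ m'' ∧ m'' ≤ M)) →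
              (d'' < d' ∨ (d'' = d' ∧ m'' ≤ m')) →
              Wp d'' m'' ω = Wp d'' m'' ω') →
          Up d' m' ω = Up d' m' ω'},
        (∑' ω : Ω, jt (xcast e (trajDay M Wp f Up.1 0 d x ω)) * P ω)
          = jt (xcast e x) := by
      intro Up
      rw [show (fun ω : Ω => jt (xcast e (trajDay M Wp f Up.1 0 d x ω)) * P ω)
          = fun ω : Ω => jt (xcast e x) * P ω from rfl]
      rw [ENNReal.tsum_mul_left, hP, mul_one]
    rw [iInf_congr hconst, iInf_const]
    rfl
  | succ n ih =>
    have hdD : d ≤ D := by omega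
    have e' : (d + 1) + n = D + 1 := by omega
    have hP' : ∑ ω : Ω, P ω = 1 := by rw [← hP, tsum_fintype]
    have hB := hindBlock M Wp P D hind
    have hfun : (fun x' : X (d + 1 + n) =>
        jt (xcast e (xcast (show d + 1 + n = d + (n + 1) by omega) x')))
        = fun x' : X (d + 1 + n) => jt (xcast e' x') := by
      funext x'
      rw [xcast_xcast]
    have hunf : Vday M P Wp f (n + 1) d (fun x' => jt (xcast e x')) x
        = ⨅ Ud : {Ud : ∀ m : Fin (M + 1), Ω → Uc d m //
            ∀ (m : Fin (M + 1)) (ω ω' : Ω),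
              (∀ m', 1 ≤ m' → m' ≤ (m : ℕ) → Wp d m' ω = Wp d m' ω') → Ud m ω = Ud m ω'},
          ∑' ω : Ω,
            Vday M P Wp f n (d + 1) (fun x' => jt (xcast e' x'))
              (f d x (fun m => Ud.1 m ω) (fun m => Wp d ((m : ℕ) + 1) ω)
                (Wp (d + 1) 0 ω)) * P ω := by
      rw [show Vday M P Wp f (n + 1) d (fun x' => jt (xcast e x')) x
          = ⨅ Ud : {Ud : ∀ m : Fin (M + 1), Ω → Uc d m //
              ∀ (m : Fin (M + 1)) (ω ω' : Ω),
                (∀ m', 1 ≤ m' → m' ≤ (m : ℕ) → Wp d m' ω = Wp d m' ω') → Ud m ω = Ud m ω'},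
            ∑' ω : Ω,
              Vday M P Wp f n (d + 1)
                (fun x' => jt (xcast e (xcast (show d + 1 + n = d + (n + 1) by omega) x')))
                (f d x (fun m => Ud.1 m ω) (fun m => Wp d ((m : ℕ) + 1) ω)
                  (Wp (d + 1) 0 ω)) * P ω from rfl]
      simp only [hfun]
    have hpeel : ∀ (Up : ∀ d' m', Ω → Uc d' m') (ω : Ω),
        jt (xcast e (trajDay M Wp f Up (n + 1) d x ω))
          = jt (xcast e' (trajDay M Wp f Up n (d + 1)
              (f d x (fun m => Up d (m : ℕ) ω) (fun m => Wp d ((m : ℕ) + 1) ω)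
                (Wp (d + 1) 0 ω)) ω)) := by
      intro Up ω
      rw [traj_peel M Wp f Up n d x ω (by omega), xcast_xcast]
    rw [hunf]
    simp only [hpeel, tsum_fintype]
    refine le_antisymm ?_ ?_
    · -- Vday-infimum ≤ cost-infimum
      refine le_iInf fun Up => ?_
      refine iInf_le_of_le ⟨fun m ω => Up.1 d (m : ℕ) ω, ?_⟩ ?_
      · intro m ω ω' hag
        refine Up.2 d (m : ℕ) ω ω' ?_
        intro d'' m'' hA hL
        have hc : d'' = d ∧ 1 ≤ m'' ∧ m'' ≤ (m : ℕ) := by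
          rcases hA with ⟨h1, h2⟩ | ⟨h1, h2, h3⟩ <;> rcases hL with h4 | ⟨h4, h5⟩ <;> omega
        obtain ⟨rfl, h5, h6⟩ := hc
        exact hag m'' h5 h6
      · show (∑ ω : Ω, Vday M P Wp f n (d + 1) (fun x' => jt (xcast e' x'))
            (f d x (fun m => Up.1 d (m : ℕ) ω) (fun m => Wp d ((m : ℕ) + 1) ω)
              (Wp (d + 1) 0 ω)) * P ω)
          ≤ ∑ ω : Ω, jt (xcast e' (trajDay M Wp f Up.1 n (d + 1)
              (f d x (fun m => Up.1 d (m : ℕ) ω) (fun m => Wp d ((m : ℕ) + 1) ω)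
                (Wp (d + 1) 0 ω)) ω)) * P ω
        set x1 : Ω → X (d + 1) := fun ω => f d x (fun m => Up.1 d (m : ℕ) ω)
          (fun m => Wp d ((m : ℕ) + 1) ω) (Wp (d + 1) 0 ω) with hx1def
        rw [← fiber_sum (bl M Wp d) (fun ω =>
            Vday M P Wp f n (d + 1) (fun x' => jt (xcast e' x')) (x1 ω) * P ω),
          ← fiber_sum (bl M Wp d) (fun ω =>
            jt (xcast e' (trajDay M Wp f Up.1 n (d + 1) (x1 ω) ω)) * P ω)]
        refine Finset.sum_le_sum fun b _ => ?_
        by_cases hfib : ∃ ω₀ : Ω, bl M Wp d ω₀ = b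
        swap
        · have hz : ∀ ω, ind (bl M Wp d ω = b) = 0 := fun ω => ind_neg fun hh => hfib ⟨ω, hh⟩
          simp [hz]
        obtain ⟨ω₀, hω₀⟩ := hfib
        have hUpagree : ∀ (ω ω' : Ω), bl M Wp d ω = bl M Wp d ω' →
            ∀ m' : ℕ, m' ≤ M → Up.1 d m' ω = Up.1 d m' ω' := by
          intro ω ω' hbl m' hm'
          refine Up.2 d m' ω ω' ?_
          intro d'' m'' hA hL
          have hc : d'' = d ∧ 1 ≤ m'' ∧ m'' ≤ M := by
            rcases hA with ⟨h1, h2⟩ | ⟨h1, h2, h3⟩ <;> rcases hL with h4 | ⟨h4, h5⟩ <;> omega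
          obtain ⟨rfl, h5, h6⟩ := hc
          exact ((bl_iff M Wp d'' ω ω').1 hbl).1 m'' h5 h6
        have hx1c : ∀ ω : Ω, bl M Wp d ω = b → x1 ω = x1 ω₀ := by
          intro ω hb
          have hbl : bl M Wp d ω = bl M Wp d ω₀ := hb.trans hω₀.symm
          show f d x _ _ _ = f d x _ _ _
          rw [show (fun m : Fin M => Wp d ((m : ℕ) + 1) ω)
              = (fun m : Fin M => Wp d ((m : ℕ) + 1) ω₀) from congrArg Prod.fst hbl,
            show Wp (d + 1) 0 ω = Wp (d + 1) 0 ω₀ from congrArg Prod.snd hbl]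
          congr 1
          funext m
          exact hUpagree ω ω₀ hbl (m : ℕ) (by omega)
        -- the modified control process, plugging in block value b on day d
        set pred : ℕ → ℕ → Ω → Ω → Prop := fun d' m' ω ωh =>
          bl M Wp d ωh = b ∧
          ∀ d'' m'', ((d + 1 < d'' ∧ m'' = 0) ∨ (d + 1 ≤ d'' ∧ 1 ≤ m'' ∧ m'' ≤ M)) →
            (d'' < d' ∨ (d'' = d' ∧ m'' ≤ m')) → Wp d'' m'' ωh = Wp d'' m'' ω with hpreddef
        set U2 : ∀ d' m', Ω → Uc d' m' := fun d' m' ω =>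
          pick (pred d' m' ω) (Classical.arbitrary _) (fun ωh => Up.1 d' m' ωh) with hU2def
        have hpredcong : ∀ (d' m' : ℕ) (ω ω' : Ω),
            (∀ d'' m'', ((d + 1 < d'' ∧ m'' = 0) ∨ (d + 1 ≤ d'' ∧ 1 ≤ m'' ∧ m'' ≤ M)) →
              (d'' < d' ∨ (d'' = d' ∧ m'' ≤ m')) → Wp d'' m'' ω = Wp d'' m'' ω') →
            pred d' m' ω = pred d' m' ω' := by
          intro d' m' ω ω' hag
          funext ωh
          refine propext ?_
          constructor
          · rintro ⟨hb', hR⟩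
            exact ⟨hb', fun d'' m'' hA hL => (hR d'' m'' hA hL).trans (hag d'' m'' hA hL)⟩
          · rintro ⟨hb', hR⟩
            exact ⟨hb', fun d'' m'' hA hL => (hR d'' m'' hA hL).trans (hag d'' m'' hA hL).symm⟩
        have hU2adapt : ∀ (d' m' : ℕ) (ω ω' : Ω),
            (∀ d'' m'', ((d + 1 < d'' ∧ m'' = 0) ∨ (d + 1 ≤ d'' ∧ 1 ≤ m'' ∧ m'' ≤ M)) →
              (d'' < d' ∨ (d'' = d' ∧ m'' ≤ m')) → Wp d'' m'' ω = Wp d'' m'' ω') →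
            U2 d' m' ω = U2 d' m' ω' :=
          fun d' m' ω ω' hag => pick_congr (hpredcong d' m' ω ω' hag) _ _
        have hU2fiber : ∀ (ω : Ω), bl M Wp d ω = b →
            ∀ d' m', U2 d' m' ω = Up.1 d' m' ω := by
          intro ω hb d' m'
          have hex2 : ∃ ωh, pred d' m' ω ωh := ⟨ω, hb, fun _ _ _ _ => rfl⟩
          obtain ⟨hsp, hpick⟩ :=
            pick_spec (pred d' m' ω) (Classical.arbitrary _) (fun ωh => Up.1 d' m' ωh) hex2
          rw [hU2def]
          show pick (pred d' m' ω) (Classical.arbitrary _) (fun ωh => Up.1 d' m' ωh)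
            = Up.1 d' m' ω
          rw [hpick]
          obtain ⟨hbch, hR⟩ := hsp
          refine Up.2 d' m' hex2.choose ω ?_
          intro d'' m'' hA hL
          have hblc : bl M Wp d hex2.choose = bl M Wp d ω := hbch.trans hb.symm
          have hbli := (bl_iff M Wp d hex2.choose ω).1 hblc
          by_cases hc1 : d'' = d ∧ 1 ≤ m'' ∧ m'' ≤ M
          · obtain ⟨rfl, h5, h6⟩ := hc1
            exact hbli.1 m'' h5 h6
          · by_cases hc2 : d'' = d + 1 ∧ m'' = 0
            · obtain ⟨rfl, rfl⟩ := hc2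
              exact hbli.2
            · refine hR d'' m'' ?_ hL
              rcases hA with ⟨h1, h2⟩ | ⟨h1, h2, h3⟩
              · exact Or.inl ⟨by omega, h2⟩
              · exact Or.inr ⟨by omega, h2, h3⟩
        have hC2dep : ∀ ω ω' : Ω,
            (∀ dd, d + 1 ≤ dd → dd ≤ D → bl M Wp dd ω = bl M Wp dd ω') →
            jt (xcast e' (trajDay M Wp f U2 n (d + 1) (x1 ω₀) ω))
              = jt (xcast e' (trajDay M Wp f U2 n (d + 1) (x1 ω₀) ω')) := by
          intro ω ω' hbl
          refine congrArg jt (congrArg (xcast e') ?_)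
          refine traj_congr M Wp f U2 U2 n (d + 1) (x1 ω₀) ω ω' ?_ ?_
          · intro d' m' h1 h2 h3
            refine hU2adapt d' m' ω ω' ?_
            intro d'' m'' hA hL
            rcases hA with ⟨ha1, ha2⟩ | ⟨ha1, ha2, ha3⟩
            · obtain ⟨k, rfl⟩ : ∃ k, d'' = k + 1 := ⟨d'' - 1, by omega⟩
              have hk : d + 1 ≤ k ∧ k ≤ D := by
                rcases hL with h4 | ⟨h4, h5⟩ <;> omega
              subst ha2
              exact congrArg Prod.snd (hbl k hk.1 hk.2)
            · have hk : d + 1 ≤ d'' ∧ d'' ≤ D := by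
                rcases hL with h4 | ⟨h4, h5⟩ <;> omega
              exact ((bl_iff M Wp d'' ω ω').1 (hbl d'' hk.1 hk.2)).1 m'' ha2 ha3
          · intro d' h1 h2
            exact hbl d' h1 (by omega)
        have hV1le : Vday M P Wp f n (d + 1) (fun x' => jt (xcast e' x')) (x1 ω₀)
            ≤ ∑ ω : Ω, jt (xcast e' (trajDay M Wp f U2 n (d + 1) (x1 ω₀) ω)) * P ω := by
          rw [ih (d + 1) e' (x1 ω₀)]
          refine iInf_le_of_le ⟨U2, hU2adapt⟩ ?_
          rw [tsum_fintype]
        calc ∑ ω : Ω, ind (bl M Wp d ω = b)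
              * (Vday M P Wp f n (d + 1) (fun x' => jt (xcast e' x')) (x1 ω) * P ω)
            = ∑ ω : Ω, Vday M P Wp f n (d + 1) (fun x' => jt (xcast e' x')) (x1 ω₀)
                * (ind (bl M Wp d ω = b) * P ω) := by
              refine Finset.sum_congr rfl fun ω _ => ?_
              by_cases hb : bl M Wp d ω = b
              · rw [hx1c ω hb, mul_left_comm]
              · rw [ind_neg hb]
                ring
          _ = Vday M P Wp f n (d + 1) (fun x' => jt (xcast e' x')) (x1 ω₀)
                * ∑ ω : Ω, ind (bl M Wp d ω = b) * P ω := by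
              rw [Finset.mul_sum]
          _ ≤ (∑ ω : Ω, jt (xcast e' (trajDay M Wp f U2 n (d + 1) (x1 ω₀) ω)) * P ω)
                * ∑ ω : Ω, ind (bl M Wp d ω = b) * P ω :=
              mul_le_mul_left hV1le _
          _ = qm M Wp P d b
                * ∑ ω : Ω, jt (xcast e' (trajDay M Wp f U2 n (d + 1) (x1 ω₀) ω)) * P ω := by
              rw [mul_comm]
              rfl
          _ = ∑ ω : Ω, ind (bl M Wp d ω = b)
                * (jt (xcast e' (trajDay M Wp f U2 n (d + 1) (x1 ω₀) ω)) * P ω) :=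
              (indep M Wp P D hP' hB d hdD b _ hC2dep).symm
          _ = ∑ ω : Ω, ind (bl M Wp d ω = b)
                * (jt (xcast e' (trajDay M Wp f Up.1 n (d + 1) (x1 ω) ω)) * P ω) := by
              refine Finset.sum_congr rfl fun ω _ => ?_
              by_cases hb : bl M Wp d ω = b
              · rw [hx1c ω hb]
                congr 2
                refine congrArg jt (congrArg (xcast e') ?_)
                refine traj_congr M Wp f U2 Up.1 n (d + 1) (x1 ω₀) ω ω ?_ (fun _ _ _ => rfl)
                intro d' m' h1 h2 h3
                exact hU2fiber ω hb d' m'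
              · rw [ind_neg hb]
                ring
    · -- cost-infimum ≤ Vday-infimum
      refine le_iInf fun Ud => ?_
      set x1 : Ω → X (d + 1) := fun ω => f d x (fun m => Ud.1 m ω)
        (fun m => Wp d ((m : ℕ) + 1) ω) (Wp (d + 1) 0 ω) with hx1def
      haveI hne : Nonempty {Up' : ∀ d' m', Ω → Uc d' m' //
          ∀ (d' m' : ℕ) (ω ω' : Ω),
            (∀ d'' m'',
                ((d + 1 < d'' ∧ m'' = 0) ∨ (d + 1 ≤ d'' ∧ 1 ≤ m'' ∧ m'' ≤ M)) →
                (d'' < d' ∨ (d'' = d' ∧ m'' ≤ m')) →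
                Wp d'' m'' ω = Wp d'' m'' ω') →
            Up' d' m' ω = Up' d' m' ω'} :=
        ⟨⟨fun _ _ _ => Classical.arbitrary _, fun _ _ _ _ _ => rfl⟩⟩
      refine ENNReal.le_of_forall_pos_le_add fun ε hε _ => ?_
      have hUdagree : ∀ (ω ω' : Ω), bl M Wp d ω = bl M Wp d ω' →
          ∀ m : Fin (M + 1), Ud.1 m ω = Ud.1 m ω' := by
        intro ω ω' hbl m
        exact Ud.2 m ω ω' fun m' h1 h2 =>
          ((bl_iff M Wp d ω ω').1 hbl).1 m' h1 (by omega)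
      set xb : ((∀ m : Fin M, Wn d ((m : ℕ) + 1)) × Wn (d + 1) 0) → X (d + 1) :=
        fun c => pick (fun ω₀ => bl M Wp d ω₀ = c) (x1 (Classical.arbitrary Ω)) x1
        with hxbdef
      have hx1b : ∀ ω : Ω, x1 ω = xb (bl M Wp d ω) := by
        intro ω
        have hex2 : ∃ ω₀, bl M Wp d ω₀ = bl M Wp d ω := ⟨ω, rfl⟩
        obtain ⟨hsp, hpick⟩ := pick_spec (fun ω₀ => bl M Wp d ω₀ = bl M Wp d ω)
          (x1 (Classical.arbitrary Ω)) x1 hex2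
        rw [hxbdef]
        show x1 ω = pick (fun ω₀ => bl M Wp d ω₀ = bl M Wp d ω)
          (x1 (Classical.arbitrary Ω)) x1
        rw [hpick]
        have hbl : bl M Wp d ω = bl M Wp d hex2.choose := hsp.symm
        show f d x _ _ _ = f d x _ _ _
        rw [show (fun m : Fin M => Wp d ((m : ℕ) + 1) ω)
            = (fun m : Fin M => Wp d ((m : ℕ) + 1) hex2.choose)
            from congrArg Prod.fst hbl,
          show Wp (d + 1) 0 ω = Wp (d + 1) 0 hex2.choose from congrArg Prod.snd hbl]
        congr 1
        funext m
        exact hUdagree ω hex2.choose hbl m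
      have hVfin : ∀ c, ∃ Up' : {Up' : ∀ d' m', Ω → Uc d' m' //
          ∀ (d' m' : ℕ) (ω ω' : Ω),
            (∀ d'' m'',
                ((d + 1 < d'' ∧ m'' = 0) ∨ (d + 1 ≤ d'' ∧ 1 ≤ m'' ∧ m'' ≤ M)) →
                (d'' < d' ∨ (d'' = d' ∧ m'' ≤ m')) →
                Wp d'' m'' ω = Wp d'' m'' ω') →
            Up' d' m' ω = Up' d' m' ω'},
          (∑ ω : Ω, jt (xcast e' (trajDay M Wp f Up'.1 n (d + 1) (xb c) ω)) * P ω)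
            ≤ Vday M P Wp f n (d + 1) (fun x' => jt (xcast e' x')) (xb c) + (ε : ℝ≥0∞) := by
        intro c
        by_cases htop : Vday M P Wp f n (d + 1) (fun x' => jt (xcast e' x')) (xb c) = ⊤
        · refine ⟨Classical.arbitrary _, ?_⟩
          rw [htop, top_add]
          exact le_top
        · have hlt2 : (⨅ Up' : {Up' : ∀ d' m', Ω → Uc d' m' //
              ∀ (d' m' : ℕ) (ω ω' : Ω),
                (∀ d'' m'',
                    ((d + 1 < d'' ∧ m'' = 0) ∨ (d + 1 ≤ d'' ∧ 1 ≤ m'' ∧ m'' ≤ M)) →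
                    (d'' < d' ∨ (d'' = d' ∧ m'' ≤ m')) →
                    Wp d'' m'' ω = Wp d'' m'' ω') →
                Up' d' m' ω = Up' d' m' ω'},
              ∑' ω : Ω, jt (xcast e' (trajDay M Wp f Up'.1 n (d + 1) (xb c) ω)) * P ω)
              < Vday M P Wp f n (d + 1) (fun x' => jt (xcast e' x')) (xb c) + (ε : ℝ≥0∞) := by
            rw [← ih (d + 1) e' (xb c)]
            exact ENNReal.lt_add_right htop (by exact_mod_cast hε.ne')
          obtain ⟨Up', hUp'⟩ := iInf_lt_iff.1 hlt2
          refine ⟨Up', ?_⟩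
          rw [tsum_fintype] at hUp'
          exact hUp'.le
      choose Φ hΦ using hVfin
      set UdF : ∀ m', Ω → Uc d m' := fun m' ω =>
        if h : m' ≤ M then Ud.1 ⟨m', by omega⟩ ω else Classical.arbitrary _ with hUdF
      set Ug : ∀ d' m', Ω → Uc d' m' := fun d' m' ω =>
        if h1 : d < d' then (Φ (bl M Wp d ω)).1 d' m' ω
        else if h2 : d' = d then cast (congrArg (fun k => Uc k m') h2.symm) (UdF m' ω)
        else Classical.arbitrary _ with hUg
      have hUgd : ∀ (m' : ℕ) (ω : Ω), Ug d m' ω = UdF m' ω := by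
        intro m' ω
        rw [hUg]
        show (if h1 : d < d then (Φ (bl M Wp d ω)).1 d m' ω
          else if h2 : d = d then cast (congrArg (fun k => Uc k m') h2.symm) (UdF m' ω)
          else Classical.arbitrary _) = UdF m' ω
        rw [dif_neg (lt_irrefl d), dif_pos rfl]
        exact eq_of_heq (cast_heq _ _)
      have hUggt : ∀ (d' m' : ℕ) (ω : Ω), d < d' →
          Ug d' m' ω = (Φ (bl M Wp d ω)).1 d' m' ω := by
        intro d' m' ω h1
        rw [hUg]
        show (if h1 : d < d' then (Φ (bl M Wp d ω)).1 d' m' ω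
          else if h2 : d' = d then cast (congrArg (fun k => Uc k m') h2.symm) (UdF m' ω)
          else Classical.arbitrary _) = _
        rw [dif_pos h1]
      have hUgadapt : ∀ (d' m' : ℕ) (ω ω' : Ω),
          (∀ d'' m'',
              ((d < d'' ∧ m'' = 0) ∨ (d ≤ d'' ∧ 1 ≤ m'' ∧ m'' ≤ M)) →
              (d'' < d' ∨ (d'' = d' ∧ m'' ≤ m')) →
              Wp d'' m'' ω = Wp d'' m'' ω') →
          Ug d' m' ω = Ug d' m' ω' := by
        intro d' m' ω ω' hag
        by_cases h1 : d < d'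
        · rw [hUggt d' m' ω h1, hUggt d' m' ω' h1]
          have hbl : bl M Wp d ω = bl M Wp d ω' := by
            refine (bl_iff M Wp d ω ω').2
              ⟨fun m'' hm1 hm2 => hag d m'' (Or.inr ⟨le_rfl, hm1, hm2⟩) (Or.inl h1), ?_⟩
            refine hag (d + 1) 0 (Or.inl ⟨by omega, rfl⟩) ?_
            rcases Nat.lt_or_ge (d + 1) d' with h | h
            · exact Or.inl h
            · exact Or.inr ⟨by omega, by omega⟩
          rw [hbl]
          refine (Φ (bl M Wp d ω')).2 d' m' ω ω' ?_
          intro d'' m'' hA hL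
          refine hag d'' m'' ?_ hL
          rcases hA with ⟨u, v⟩ | ⟨u, v, w⟩
          · exact Or.inl ⟨by omega, v⟩
          · exact Or.inr ⟨by omega, v, w⟩
        · by_cases h2 : d' = d
          · subst h2
            rw [hUgd m' ω, hUgd m' ω']
            simp only [hUdF]
            by_cases h3 : m' ≤ M
            · rw [dif_pos h3, dif_pos h3]
              refine Ud.2 ⟨m', by omega⟩ ω ω' ?_
              intro m'' hm1 hm2
              exact hag d' m'' (Or.inr ⟨le_rfl, hm1, by omega⟩)
                (Or.inr ⟨rfl, by exact hm2⟩)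
            · rw [dif_neg h3, dif_neg h3]
          · rw [hUg]
            show (if h1 : d < d' then (Φ (bl M Wp d ω)).1 d' m' ω
              else if h2 : d' = d then cast (congrArg (fun k => Uc k m') h2.symm) (UdF m' ω)
              else Classical.arbitrary _) = _
            rw [dif_neg h1, dif_neg h2]
            show _ = (if h1 : d < d' then (Φ (bl M Wp d ω')).1 d' m' ω'
              else if h2 : d' = d then cast (congrArg (fun k => Uc k m') h2.symm) (UdF m' ω')
              else Classical.arbitrary _)
            rw [dif_neg h1, dif_neg h2]
      refine le_trans (iInf_le _ ⟨Ug, hUgadapt⟩) ?_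
      have hkey : ∀ ω : Ω,
          jt (xcast e' (trajDay M Wp f Ug n (d + 1)
            (f d x (fun m => Ug d (m : ℕ) ω) (fun m => Wp d ((m : ℕ) + 1) ω)
              (Wp (d + 1) 0 ω)) ω))
          = jt (xcast e' (trajDay M Wp f (Φ (bl M Wp d ω)).1 n (d + 1)
              (xb (bl M Wp d ω)) ω)) := by
        intro ω
        have hstart : f d x (fun m => Ug d (m : ℕ) ω) (fun m => Wp d ((m : ℕ) + 1) ω)
            (Wp (d + 1) 0 ω) = xb (bl M Wp d ω) := by
          rw [← hx1b ω, hx1def]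
          show f d x _ _ _ = f d x _ _ _
          congr 1
          funext m
          rw [hUgd (m : ℕ) ω, hUdF]
          show (if h : (m : ℕ) ≤ M then Ud.1 ⟨(m : ℕ), by omega⟩ ω
            else Classical.arbitrary _) = Ud.1 m ω
          rw [dif_pos (by omega : (m : ℕ) ≤ M)]
        rw [hstart]
        refine congrArg jt (congrArg (xcast e') ?_)
        refine traj_congr M Wp f Ug (Φ (bl M Wp d ω)).1 n (d + 1) (xb (bl M Wp d ω)) ω ω
          ?_ (fun _ _ _ => rfl)
        intro d' m' hd1 hd2 hm
        exact hUggt d' m' ω (by omega)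
      have hΦdep : ∀ c, ∀ ω ω' : Ω,
          (∀ dd, d + 1 ≤ dd → dd ≤ D → bl M Wp dd ω = bl M Wp dd ω') →
          jt (xcast e' (trajDay M Wp f (Φ c).1 n (d + 1) (xb c) ω))
            = jt (xcast e' (trajDay M Wp f (Φ c).1 n (d + 1) (xb c) ω')) := by
        intro c ω ω' hbl
        refine congrArg jt (congrArg (xcast e') ?_)
        refine traj_congr M Wp f (Φ c).1 (Φ c).1 n (d + 1) (xb c) ω ω' ?_ ?_
        · intro d' m' h1 h2 h3
          refine (Φ c).2 d' m' ω ω' ?_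
          intro d'' m'' hA hL
          rcases hA with ⟨ha1, ha2⟩ | ⟨ha1, ha2, ha3⟩
          · obtain ⟨k, rfl⟩ : ∃ k, d'' = k + 1 := ⟨d'' - 1, by omega⟩
            have hk : d + 1 ≤ k ∧ k ≤ D := by
              rcases hL with h4 | ⟨h4, h5⟩ <;> omega
            subst ha2
            exact congrArg Prod.snd (hbl k hk.1 hk.2)
          · have hk : d + 1 ≤ d'' ∧ d'' ≤ D := by
              rcases hL with h4 | ⟨h4, h5⟩ <;> omega
            exact ((bl_iff M Wp d'' ω ω').1 (hbl d'' hk.1 hk.2)).1 m'' ha2 ha3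
        · intro d' h1 h2
          exact hbl d' h1 (by omega)
      calc ∑ ω : Ω, jt (xcast e' (trajDay M Wp f Ug n (d + 1)
              (f d x (fun m => Ug d (m : ℕ) ω) (fun m => Wp d ((m : ℕ) + 1) ω)
                (Wp (d + 1) 0 ω)) ω)) * P ω
          = ∑ c, ∑ ω : Ω, ind (bl M Wp d ω = c)
              * (jt (xcast e' (trajDay M Wp f (Φ c).1 n (d + 1) (xb c) ω)) * P ω) := by
            rw [show (fun ω : Ω => jt (xcast e' (trajDay M Wp f Ug n (d + 1)
                (f d x (fun m => Ug d (m : ℕ) ω) (fun m => Wp d ((m : ℕ) + 1) ω)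
                  (Wp (d + 1) 0 ω)) ω)) * P ω)
              = fun ω : Ω => jt (xcast e' (trajDay M Wp f (Φ (bl M Wp d ω)).1 n (d + 1)
                  (xb (bl M Wp d ω)) ω)) * P ω from funext fun ω => by rw [hkey ω]]
            rw [← fiber_sum (bl M Wp d) (fun ω =>
              jt (xcast e' (trajDay M Wp f (Φ (bl M Wp d ω)).1 n (d + 1)
                (xb (bl M Wp d ω)) ω)) * P ω)]
            refine Finset.sum_congr rfl fun c _ => Finset.sum_congr rfl fun ω _ => ?_
            by_cases hb : bl M Wp d ω = c
            · rw [hb]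
            · rw [ind_neg hb]
              ring
        _ = ∑ c, qm M Wp P d c
              * ∑ ω : Ω, jt (xcast e' (trajDay M Wp f (Φ c).1 n (d + 1) (xb c) ω)) * P ω :=
            Finset.sum_congr rfl fun c _ =>
              indep M Wp P D hP' hB d hdD c _ (hΦdep c)
        _ ≤ ∑ c, qm M Wp P d c
              * (Vday M P Wp f n (d + 1) (fun x' => jt (xcast e' x')) (xb c) + (ε : ℝ≥0∞)) :=
            Finset.sum_le_sum fun c _ => mul_le_mul_right (hΦ c) _
        _ = (∑ c, qm M Wp P d c
              * Vday M P Wp f n (d + 1) (fun x' => jt (xcast e' x')) (xb c))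
              + (∑ c, qm M Wp P d c) * (ε : ℝ≥0∞) := by
            rw [Finset.sum_mul, ← Finset.sum_add_distrib]
            exact Finset.sum_congr rfl fun c _ => mul_add _ _ _
        _ = (∑ ω : Ω, Vday M P Wp f n (d + 1) (fun x' => jt (xcast e' x')) (x1 ω) * P ω)
              + (ε : ℝ≥0∞) := by
            rw [sum_qm M Wp P hP' d, one_mul]
            congr 1
            rw [← fiber_sum (bl M Wp d) (fun ω =>
              Vday M P Wp f n (d + 1) (fun x' => jt (xcast e' x')) (x1 ω) * P ω)]
            refine Finset.sum_congr rfl fun c _ => Eq.symm ?_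
            calc ∑ ω : Ω, ind (bl M Wp d ω = c)
                  * (Vday M P Wp f n (d + 1) (fun x' => jt (xcast e' x')) (x1 ω) * P ω)
                = ∑ ω : Ω, Vday M P Wp f n (d + 1) (fun x' => jt (xcast e' x')) (xb c)
                    * (ind (bl M Wp d ω = c) * P ω) := by
                  refine Finset.sum_congr rfl fun ω _ => ?_
                  by_cases hb : bl M Wp d ω = c
                  · rw [hx1b ω, hb, mul_left_comm]
                  · rw [ind_neg hb]
                    ring
              _ = qm M Wp P d c
                    * Vday M P Wp f n (d + 1) (fun x' => jt (xcast e' x')) (xb c) := by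
                  rw [← Finset.mul_sum]
                  exact mul_comm _ _
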